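/- Let r ∈ ℝ with r ≠ 0. Define d' : ℕ × ℕ → ℝ by d'(2k-1, 2(m-k)+1) = (1/√(2(cosh r - 1))) · (-tanh r)^m · √((2m)!) · √(Nat.choose (2m) (2k-1)) / (2^{2m-1} · m!) for all m ≥ 1 and 1 ≤ k ≤ m, and d'(j,l) = 0 whenever j or l is even. Then Σ_{(j,l)∈ℕ×ℕ} |d'(j,l)|² = 1. (This is the statement that for the squeezed-vacuum NOON state with anti-correlated inputs, both parties detect an odd photon number with probability 1, i.e. P(1,1|0,1) = P(1,1|1,0) = 1; together with the correlated case this gives the maximal GYNI value 𝒥 = 1.) -/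

import Mathlib

open scoped BigOperators

open Finset

/-! Auxiliary lemmas -/

/-- Splitting a sum over `range (2*n)` into pairs. -/
lemma aux_sum_range_two_mul (f : ℕ → ℝ) (n : ℕ) :
    ∑ i ∈ range (2 * n), f i = ∑ a ∈ range n, (f (2 * a) + f (2 * a + 1)) := by
  induction n with
  | zero => simp
  | succ n ih =>
    rw [show 2 * (n + 1) = 2 * n + 1 + 1 by ring, sum_range_succ, sum_range_succ, ih,
      sum_range_succ]
    ring

/-- The sum of the odd-index binomial coefficients in row `2n+2` is `2^(2n+1)`. -/
lemma aux_odd_choose_sum (n : ℕ) :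
    ∑ a ∈ range (n + 1), (((2 * n + 2).choose (2 * a + 1) : ℝ)) = 2 ^ (2 * n + 1) := by
  have h0 : (((2 * n + 2).choose (2 * n + 3) : ℝ)) = 0 := by
    rw [Nat.choose_eq_zero_of_lt (by omega)]; norm_num
  have hA : ∑ i ∈ range (2 * n + 4), (((2 * n + 2).choose i : ℝ)) = 2 ^ (2 * n + 2) := by
    rw [show 2 * n + 4 = (2 * n + 2 + 1) + 1 by ring, sum_range_succ]
    have := Nat.sum_range_choose (2 * n + 2)
    have hcast : ∑ i ∈ range (2 * n + 2 + 1), (((2 * n + 2).choose i : ℝ)) = 2 ^ (2 * n + 2) := by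
      exact_mod_cast congrArg (Nat.cast : ℕ → ℝ) this
    rw [hcast, show 2 * n + 2 + 1 = 2 * n + 3 by ring, h0, add_zero]
  have hB : ∑ i ∈ range (2 * n + 4), ((-1 : ℝ)) ^ i * (((2 * n + 2).choose i : ℝ)) = 0 := by
    rw [show 2 * n + 4 = (2 * n + 2 + 1) + 1 by ring, sum_range_succ]
    have := Int.alternating_sum_range_choose_of_ne (n := 2 * n + 2) (by omega)
    have hcast : ∑ i ∈ range (2 * n + 2 + 1), ((-1 : ℝ)) ^ i * (((2 * n + 2).choose i : ℝ))
        = 0 := by exact_mod_cast congrArg (Int.cast : ℤ → ℝ) this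
    rw [hcast, show 2 * n + 2 + 1 = 2 * n + 3 by ring, h0, zero_add, mul_zero]
  have h1 := aux_sum_range_two_mul (fun i => (((2 * n + 2).choose i : ℝ))) (n + 2)
  have h2 := aux_sum_range_two_mul
      (fun i => ((-1 : ℝ)) ^ i * (((2 * n + 2).choose i : ℝ))) (n + 2)
  rw [show 2 * (n + 2) = 2 * n + 4 by ring] at h1 h2
  rw [hA] at h1
  rw [hB] at h2
  have h2' : ∑ a ∈ range (n + 2), ((((2 * n + 2).choose (2 * a) : ℝ))
      - (((2 * n + 2).choose (2 * a + 1) : ℝ))) = 0 := by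
    have hcg : ∀ a ∈ range (n + 2), (((2 * n + 2).choose (2 * a) : ℝ))
        - (((2 * n + 2).choose (2 * a + 1) : ℝ))
        = (-1 : ℝ) ^ (2 * a) * (((2 * n + 2).choose (2 * a) : ℝ))
          + (-1 : ℝ) ^ (2 * a + 1) * (((2 * n + 2).choose (2 * a + 1) : ℝ)) := by
      intro a _
      have e1 : (-1 : ℝ) ^ (2 * a) = 1 := by
        rw [pow_mul]; norm_num
      have e2 : (-1 : ℝ) ^ (2 * a + 1) = -1 := by
        rw [pow_succ, e1]; norm_num
      rw [e1, e2]; ring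
    rw [Finset.sum_congr rfl hcg, ← h2]
  have h3 : ∑ a ∈ range (n + 2), (2 : ℝ) * (((2 * n + 2).choose (2 * a + 1) : ℝ))
      = 2 ^ (2 * n + 2) := by
    have hcg : ∀ a ∈ range (n + 2), (2 : ℝ) * (((2 * n + 2).choose (2 * a + 1) : ℝ))
        = ((((2 * n + 2).choose (2 * a) : ℝ)) + (((2 * n + 2).choose (2 * a + 1) : ℝ)))
          - ((((2 * n + 2).choose (2 * a) : ℝ)) - (((2 * n + 2).choose (2 * a + 1) : ℝ))) := by
      intro a _; ring
    rw [Finset.sum_congr rfl hcg, Finset.sum_sub_distrib, ← h1, h2', sub_zero]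
  rw [← Finset.mul_sum] at h3
  have h4 : ∑ a ∈ range (n + 2), (((2 * n + 2).choose (2 * a + 1) : ℝ)) = 2 ^ (2 * n + 1) := by
    have he : (2 : ℝ) ^ (2 * n + 2) = 2 * 2 ^ (2 * n + 1) := by ring
    rw [he] at h3
    linarith [h3]
  rw [sum_range_succ] at h4
  rw [show 2 * (n + 1) + 1 = 2 * n + 3 by ring, h0, add_zero] at h4
  exact h4

/-- `descPochhammer` evaluated at `-1/2`. -/
lemma aux_descPochhammer_half (k : ℕ) :
    (descPochhammer ℤ k).smeval (-(1/2) : ℝ)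
      = (-1) ^ k * ((2 * k).factorial : ℝ) / (4 ^ k * (k.factorial : ℝ)) := by
  induction k with
  | zero => simp [descPochhammer]
  | succ k ih =>
    rw [descPochhammer_succ_right, Polynomial.smeval_mul ℤ, ih]
    have hx : Polynomial.smeval ((Polynomial.X : Polynomial ℤ) - (k : Polynomial ℤ))
        (-(1/2) : ℝ) = -(1/2) - (k : ℝ) := by
      simp [Polynomial.smeval_sub, Polynomial.smeval_X, Polynomial.smeval_natCast]
    rw [hx]
    have e1 : (2 * (k + 1)) = (2 * k + 1) + 1 := by ring
    rw [e1, Nat.factorial_succ, Nat.factorial_succ, Nat.factorial_succ]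
    push_cast
    have hk : (k.factorial : ℝ) ≠ 0 := Nat.cast_ne_zero.2 (Nat.factorial_ne_zero k)
    have h4 : (4 : ℝ) ^ k ≠ 0 := by positivity
    field_simp
    ring

/-- `Ring.choose (-1/2) k` in terms of the central binomial coefficient. -/
lemma aux_ring_choose_half (k : ℕ) :
    Ring.choose (-(1/2) : ℝ) k = (-(1/4)) ^ k * (((2 * k).choose k : ℝ)) := by
  have h := Ring.descPochhammer_eq_factorial_smul_choose (-(1/2) : ℝ) k
  rw [aux_descPochhammer_half] at h
  have hk : (k.factorial : ℝ) ≠ 0 := Nat.cast_ne_zero.2 (Nat.factorial_ne_zero k)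
  have h4 : (4 : ℝ) ^ k ≠ 0 := by positivity
  have hch : (((2 * k).choose k : ℝ)) = ((2 * k).factorial : ℝ)
      / ((k.factorial : ℝ) * (k.factorial : ℝ)) := by
    rw [Nat.cast_choose ℝ (by omega : k ≤ 2 * k), show 2 * k - k = k by omega]
  rw [nsmul_eq_mul] at h
  have hneg : (-(1/4) : ℝ) ^ k = (-1) ^ k / 4 ^ k := by
    rw [show (-(1/4) : ℝ) = (-1) / 4 by norm_num, div_pow]
  rw [hch, hneg]
  field_simp at h ⊢
  linarith [h]

/-- `Ring.choose (-1) n = (-1)^n`. -/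
lemma aux_ring_choose_neg_one (n : ℕ) : Ring.choose (-1 : ℝ) n = (-1) ^ n := by
  induction n with
  | zero => simp [Ring.choose_zero_right]
  | succ n ih =>
    have h := Ring.choose_succ_succ (-1 : ℝ) n
    rw [neg_add_cancel, Ring.choose_zero_succ, ih] at h
    have : Ring.choose (-1 : ℝ) (n + 1) = -(-1) ^ n := by linarith [h]
    rw [this, pow_succ]
    ring

/-- Convolution identity for central binomial coefficients. -/
lemma aux_centralBinom_conv (n : ℕ) :
    ∑ k ∈ range (n + 1), (((2 * k).choose k : ℝ)) * (((2 * (n - k)).choose (n - k) : ℝ))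
      = 4 ^ n := by
  have h := Ring.add_choose_eq (r := (-(1/2) : ℝ)) (s := (-(1/2) : ℝ)) n (Commute.all _ _)
  rw [show (-(1/2) : ℝ) + -(1/2) = -1 by norm_num, aux_ring_choose_neg_one] at h
  rw [Finset.Nat.sum_antidiagonal_eq_sum_range_succ_mk] at h
  have h2 : ∑ k ∈ range (n + 1),
      Ring.choose (-(1/2) : ℝ) k * Ring.choose (-(1/2) : ℝ) (n - k)
      = (-(1/4)) ^ n * ∑ k ∈ range (n + 1),
        (((2 * k).choose k : ℝ)) * (((2 * (n - k)).choose (n - k) : ℝ)) := by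
    rw [Finset.mul_sum]
    apply Finset.sum_congr rfl
    intro k hk
    have hkn : k ≤ n := by
      have := Finset.mem_range.1 hk; omega
    rw [aux_ring_choose_half, aux_ring_choose_half]
    have hpow : (-(1/4) : ℝ) ^ n = (-(1/4)) ^ k * (-(1/4)) ^ (n - k) := by
      rw [← pow_add]
      congr 1
      omega
    rw [hpow]
    ring
  rw [h2] at h
  have hne : ((-(1/4) : ℝ)) ^ n ≠ 0 := by
    apply pow_ne_zero; norm_num
  have key : (-(1/4) : ℝ) ^ n * 4 ^ n = (-1) ^ n := by
    rw [← mul_pow]; norm_num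
  apply mul_left_cancel₀ hne
  rw [← h, key]

/-- The central binomial generating series. -/
lemma aux_centralBinom_series {x : ℝ} (hx0 : 0 ≤ x) (hx : 4 * x < 1) :
    HasSum (fun m : ℕ => (((2 * m).choose m : ℝ)) * x ^ m) (1 / Real.sqrt (1 - 4 * x)) := by
  set a : ℕ → ℝ := fun m => (((2 * m).choose m : ℝ)) * x ^ m with ha_def
  have ha_nonneg : ∀ m, 0 ≤ a m := by
    intro m; apply mul_nonneg (Nat.cast_nonneg _) (pow_nonneg hx0 _)
  have hbound : ∀ m, a m ≤ (4 * x) ^ m := by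
    intro m
    have hle : (2 * m).choose m ≤ 4 ^ m := by
      calc (2 * m).choose m ≤ ∑ i ∈ range (2 * m + 1), (2 * m).choose i :=
            Finset.single_le_sum (fun i _ => Nat.zero_le _) (Finset.mem_range.2 (by omega))
        _ = 2 ^ (2 * m) := Nat.sum_range_choose (2 * m)
        _ = 4 ^ m := by rw [pow_mul]; norm_num
    calc a m ≤ (4 ^ m : ℝ) * x ^ m := by
          apply mul_le_mul_of_nonneg_right _ (pow_nonneg hx0 m)
          exact_mod_cast hle
      _ = (4 * x) ^ m := by rw [mul_pow]
  have hsummable : Summable a :=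
    Summable.of_nonneg_of_le ha_nonneg hbound
      (summable_geometric_of_lt_one (by positivity) hx)
  have hprod : Summable fun z : ℕ × ℕ => a z.1 * a z.2 :=
    hsummable.mul_of_nonneg hsummable ha_nonneg ha_nonneg
  have hcauchy := Summable.tsum_mul_tsum_eq_tsum_sum_range hsummable hsummable hprod
  have hinner : ∀ n : ℕ, ∑ k ∈ range (n + 1), a k * a (n - k) = (4 * x) ^ n := by
    intro n
    have : ∑ k ∈ range (n + 1), a k * a (n - k)
        = ∑ k ∈ range (n + 1),
          ((((2 * k).choose k : ℝ)) * (((2 * (n - k)).choose (n - k) : ℝ))) * x ^ n := by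
      apply Finset.sum_congr rfl
      intro k hk
      have hkn : k ≤ n := by have := Finset.mem_range.1 hk; omega
      simp only [ha_def]
      rw [show x ^ n = x ^ k * x ^ (n - k) by rw [← pow_add]; congr 1; omega]
      ring
    rw [this, ← Finset.sum_mul, aux_centralBinom_conv, mul_pow]
  have hgeo : ∑' n : ℕ, (4 * x) ^ n = (1 - 4 * x)⁻¹ :=
    tsum_geometric_of_lt_one (by positivity) hx
  have hsq : (∑' m, a m) * (∑' m, a m) = (1 - 4 * x)⁻¹ := by
    rw [hcauchy]
    rw [tsum_congr hinner, hgeo]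
  have h1x : (0 : ℝ) < 1 - 4 * x := by linarith
  have hS_pos : (0 : ℝ) < ∑' m, a m := by
    have h0 : a 0 = 1 := by simp [ha_def]
    have := Summable.le_tsum hsummable 0 (fun j _ => ha_nonneg j)
    rw [h0] at this
    linarith
  have hval : ∑' m, a m = 1 / Real.sqrt (1 - 4 * x) := by
    have h2 : (∑' m, a m) = Real.sqrt ((1 - 4 * x)⁻¹) := by
      rw [← Real.sqrt_sq hS_pos.le]
      congr 1
      rw [sq]
      exact hsq
    rw [h2, Real.sqrt_inv, one_div]
  have := hsummable.hasSum
  rwa [hval] at this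

/-- For the squeezed-vacuum NOON state with anti-correlated inputs, both parties
detect an odd photon number with probability 1: the output coefficients,
supported on pairs of odd photon numbers, are normalized. -/
theorem squeezed_NOON_anticorrelated_parity
    (r : ℝ) (hr : r ≠ 0) (d' : ℕ × ℕ → ℝ)
    (hd : ∀ m k : ℕ, 1 ≤ m → 1 ≤ k → k ≤ m →
      d' (2 * k - 1, 2 * (m - k) + 1) =
        (1 / Real.sqrt (2 * (Real.cosh r - 1))) * (-Real.tanh r) ^ m *
          Real.sqrt (Nat.factorial (2 * m) : ℝ) *
          Real.sqrt (Nat.choose (2 * m) (2 * k - 1) : ℝ) /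
          ((2 : ℝ) ^ (2 * (m : ℤ) - 1) * (Nat.factorial m : ℝ)))
    (hd_even : ∀ j l : ℕ, Even j ∨ Even l → d' (j, l) = 0) :
    ∑' p : ℕ × ℕ, |d' p| ^ 2 = 1 := by
  have hc1 : 1 < Real.cosh r := Real.one_lt_cosh.2 hr
  have hc0 : 0 < Real.cosh r := lt_trans one_pos hc1
  set c : ℝ := Real.cosh r with hc_def
  set t : ℝ := Real.tanh r with ht_def
  have hK : (0 : ℝ) < 2 * (c - 1) := by linarith
  set K : ℝ := 2 * (c - 1) with hK_def
  have ht2 : 1 - t ^ 2 = 1 / c ^ 2 := by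
    rw [ht_def, hc_def, Real.tanh_eq_sinh_div_cosh, div_pow]
    have hcsq : Real.cosh r ^ 2 ≠ 0 := by positivity
    have hid := Real.cosh_sq_sub_sinh_sq r
    field_simp
    try linarith [hid]
  have ht2lt : t ^ 2 < 1 := by
    have : (0:ℝ) < 1 / c ^ 2 := by positivity
    linarith
  -- the central binomial series at x = t^2/4
  have hx0 : (0 : ℝ) ≤ t ^ 2 / 4 := by positivity
  have hx1 : 4 * (t ^ 2 / 4) < 1 := by linarith
  have hsqrt : Real.sqrt (1 - 4 * (t ^ 2 / 4)) = 1 / c := by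
    rw [show 1 - 4 * (t ^ 2 / 4) = 1 - t ^ 2 by ring, ht2]
    rw [one_div, Real.sqrt_inv, one_div]
    congr 1
    exact Real.sqrt_sq hc0.le
  have hs : HasSum (fun m : ℕ => (((2 * m).choose m : ℝ)) * (t ^ 2 / 4) ^ m) c := by
    have := aux_centralBinom_series hx0 hx1
    rwa [hsqrt, one_div_one_div] at this
  have hs' : HasSum (fun m : ℕ => (((2 * (m + 1)).choose (m + 1) : ℝ)) * (t ^ 2 / 4) ^ (m + 1))
      (c - 1) := by
    have h := (hasSum_nat_add_iff' (f := fun m : ℕ => (((2 * m).choose m : ℝ)) * (t ^ 2 / 4) ^ m)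
      (g := c) 1).2 hs
    simpa using h
  have hg : HasSum (fun n : ℕ => (2 / K) *
      ((((2 * (n + 1)).choose (n + 1) : ℝ)) * (t ^ 2 / 4) ^ (n + 1))) 1 := by
    have h := hs'.mul_left (2 / K)
    have hval : (2 / K) * (c - 1) = 1 := by
      rw [hK_def]; field_simp
      exact div_self (sub_ne_zero.2 (ne_of_gt hc1))
    rwa [hval] at h
  -- explicit formula for the squared coefficients on odd pairs
  set F : ℕ × ℕ → ℝ := fun q => |d' (2 * q.1 + 1, 2 * q.2 + 1)| ^ 2 with hF_def
  have hFnn : ∀ q, 0 ≤ F q := fun q => by positivity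
  have hF : ∀ a b : ℕ, F (a, b) = (1 / K) * 4 * (((2 * (a + b + 1)).choose (2 * a + 1) : ℝ))
      * (((2 * (a + b + 1)).factorial : ℝ)) * t ^ (2 * (a + b + 1))
      / (16 ^ (a + b + 1) * (((a + b + 1).factorial : ℝ)) ^ 2) := by
    intro a b
    set m : ℕ := a + b + 1 with hm_def
    have h := hd m (a + 1) (by omega) (by omega) (by omega)
    rw [show 2 * (a + 1) - 1 = 2 * a + 1 by omega, show m - (a + 1) = b by omega] at h
    have hFq : F (a, b) = (d' (2 * a + 1, 2 * b + 1)) ^ 2 := by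
      rw [hF_def]; simp [sq_abs]
    rw [hFq, h]
    have hpow2 : ((2 : ℝ)) ^ (2 * (m : ℤ) - 1) = 4 ^ m / 2 := by
      rw [zpow_sub₀ (by norm_num : (2:ℝ) ≠ 0)]
      rw [show (2 * (m : ℤ)) = ((2 * m : ℕ) : ℤ) by push_cast; ring]
      rw [zpow_natCast, zpow_one, pow_mul]
      norm_num
    rw [hpow2]
    have h1 : Real.sqrt K ^ 2 = K := Real.sq_sqrt hK.le
    have h2 : Real.sqrt (((2 * m).factorial : ℝ)) ^ 2 = ((2 * m).factorial : ℝ) :=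
      Real.sq_sqrt (Nat.cast_nonneg _)
    have h3 : Real.sqrt (((2 * m).choose (2 * a + 1) : ℝ)) ^ 2
        = (((2 * m).choose (2 * a + 1) : ℝ)) := Real.sq_sqrt (Nat.cast_nonneg _)
    have h4 : ((-t) ^ m) ^ 2 = t ^ (2 * m) := by
      rw [← pow_mul, show m * 2 = 2 * m by ring, pow_mul, pow_mul, neg_pow, neg_one_sq]
      ring_nf
    have h16 : (16 : ℝ) ^ m = (4 ^ m) ^ 2 := by
      rw [← pow_mul, show m * 2 = 2 * m by ring, pow_mul]
      norm_num
    have hKne : K ≠ 0 := ne_of_gt hK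
    have hm4 : ((4:ℝ) ^ m) ≠ 0 := by positivity
    have hmf : ((m.factorial : ℝ)) ≠ 0 := by
      exact_mod_cast (Nat.factorial_pos m).ne'
    simp only [div_pow, mul_pow, one_pow]
    rw [h1, h2, h3, h4, h16]
    field_simp
    ring
  -- fiberwise sums over antidiagonals
  have hfiber : ∀ n : ℕ,
      HasSum (fun p : {x // x ∈ Finset.HasAntidiagonal.antidiagonal n} => F p)
        ((2 / K) * ((((2 * (n + 1)).choose (n + 1) : ℝ)) * (t ^ 2 / 4) ^ (n + 1))) := by
    intro n
    have h1 : HasSum (fun p : {x // x ∈ Finset.HasAntidiagonal.antidiagonal n} => F p)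
        (∑ p ∈ Finset.HasAntidiagonal.antidiagonal n, F p) := by
      have := hasSum_fintype (fun p : {x // x ∈ Finset.HasAntidiagonal.antidiagonal n} => F p)
      rwa [Finset.sum_coe_sort] at this
    have h2 : ∑ p ∈ Finset.HasAntidiagonal.antidiagonal n, F p
        = (2 / K) * ((((2 * (n + 1)).choose (n + 1) : ℝ)) * (t ^ 2 / 4) ^ (n + 1)) := by
      rw [Finset.Nat.sum_antidiagonal_eq_sum_range_succ_mk]
      have hterm : ∀ k ∈ range (n + 1), F (k, n - k)
          = ((1 / K) * 4 * (((2 * (n + 1)).factorial : ℝ)) * t ^ (2 * (n + 1))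
            / (16 ^ (n + 1) * (((n + 1).factorial : ℝ)) ^ 2))
            * (((2 * n + 2).choose (2 * k + 1) : ℝ)) := by
        intro k hk
        have hkn : k ≤ n := by have := Finset.mem_range.1 hk; omega
        rw [hF k (n - k), show k + (n - k) + 1 = n + 1 by omega,
          show 2 * (n + 1) = 2 * n + 2 by ring]
        ring
      rw [Finset.sum_congr rfl hterm, ← Finset.mul_sum, aux_odd_choose_sum]
      have hch : (((2 * (n + 1)).choose (n + 1) : ℝ))
          = (((2 * (n + 1)).factorial : ℝ)) / ((((n + 1).factorial : ℝ)) * (((n + 1).factorial : ℝ))) := by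
        rw [Nat.cast_choose ℝ (by omega : n + 1 ≤ 2 * (n + 1)),
          show 2 * (n + 1) - (n + 1) = n + 1 by omega]
      rw [hch]
      have hP : (0:ℝ) < (2:ℝ) ^ (2 * n + 1) := by positivity
      set P : ℝ := (2:ℝ) ^ (2 * n + 1) with hP_def
      have h16 : (16 : ℝ) ^ (n + 1) = P * P * 4 := by
        rw [hP_def, show (16:ℝ) = 2 ^ 4 by norm_num, ← pow_mul,
          show (4:ℝ) = 2 ^ 2 by norm_num, ← pow_add, ← pow_add]
        congr 1
        ring
      have h4 : (4 : ℝ) ^ (n + 1) = 2 * P := by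
        calc (4 : ℝ) ^ (n + 1) = (2 ^ 2 : ℝ) ^ (n + 1) := by norm_num
          _ = 2 ^ (2 * (n + 1)) := by rw [← pow_mul]
          _ = 2 * 2 ^ (2 * n + 1) := by
              rw [show 2 * (n + 1) = (2 * n + 1) + 1 by ring, pow_succ]; ring
          _ = 2 * P := by rw [hP_def]
      have hdiv : (t ^ 2 / 4) ^ (n + 1) = t ^ (2 * (n + 1)) / 4 ^ (n + 1) := by
        rw [div_pow, ← pow_mul]
      rw [hdiv, h16, h4]
      have hfp : (0:ℝ) < (((n + 1).factorial : ℝ)) := by exact_mod_cast Nat.factorial_pos (n+1)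
      have hKne : K ≠ 0 := ne_of_gt hK
      field_simp
    rwa [h2] at h1
  -- assemble via the sigma equivalence
  set e : (Σ n : ℕ, {x // x ∈ Finset.HasAntidiagonal.antidiagonal n}) ≃ ℕ × ℕ :=
    Finset.HasAntidiagonal.sigmaAntidiagonalEquivProd with he_def
  set f : (Σ n : ℕ, {x // x ∈ Finset.HasAntidiagonal.antidiagonal n}) → ℝ := fun σ => F (e σ) with hf_def
  have hfib' : ∀ n, HasSum (fun p : {x // x ∈ Finset.HasAntidiagonal.antidiagonal n} => f ⟨n, p⟩)
      ((2 / K) * ((((2 * (n + 1)).choose (n + 1) : ℝ)) * (t ^ 2 / 4) ^ (n + 1))) := by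
    intro n
    exact hfiber n
  have hsummf : Summable f := by
    rw [summable_sigma_of_nonneg (fun σ => hFnn _)]
    constructor
    · intro n; exact (hfib' n).summable
    · apply Summable.congr hg.summable
      intro n
      exact ((hfib' n).tsum_eq).symm
  have hhsf : HasSum f 1 := HasSum.sigma_of_hasSum hg hfib' hsummf
  have hhsF : HasSum F 1 := e.hasSum_iff.1 hhsf
  -- transport along the injection into odd pairs
  have hinj : Function.Injective (fun q : ℕ × ℕ => (2 * q.1 + 1, 2 * q.2 + 1)) := by
    intro q q' h
    simp only [Prod.mk.injEq] at h
    obtain ⟨h1, h2⟩ := h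
    exact Prod.ext (by omega) (by omega)
  have hsupp : Function.support (fun p : ℕ × ℕ => |d' p| ^ 2)
      ⊆ Set.range (fun q : ℕ × ℕ => (2 * q.1 + 1, 2 * q.2 + 1)) := by
    intro p hp
    by_contra hnr
    apply hp
    have : Even p.1 ∨ Even p.2 := by
      by_contra hno
      push_neg at hno
      obtain ⟨h1, h2⟩ := hno
      obtain ⟨a, ha⟩ := Nat.not_even_iff_odd.1 h1
      obtain ⟨b, hb⟩ := Nat.not_even_iff_odd.1 h2
      exact hnr ⟨(a, b), by simp [Prod.ext_iff]; omega⟩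
    have := hd_even p.1 p.2 this
    simp only [Prod.mk.eta] at this
    simp [this]
  rw [← Function.Injective.tsum_eq hinj hsupp]
  exact hhsF.tsum_eq
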